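/- Let (R, 𝔪) be a Noetherian local ring and w a valuation on R which is nonnegative on R and strictly positive on 𝔪. Then w is continuous with respect to the 𝔪-adic topology on R (with ℝ ∪ {∞} given its order topology), and hence extends uniquely by continuity to a valuation on the 𝔪-adic completion of R. -/

import Mathlib

open IsLocalRing

namespace LocalValAux

open AdicCompletion

variable {A : Type*} [CommRing A]

lemma val_neg (v : A → ENNReal) (hmul : ∀ f g, v (f * g) = v f + v g)
    (hone : v 1 = 0) (f : A) : v (-f) = v f := by
  have h1 : v (-1 : A) = 0 := by
    have := hmul (-1 : A) (-1)
    rw [neg_one_mul, neg_neg, hone] at this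
    exact (add_eq_zero.mp this.symm).1
  calc v (-f) = v ((-1) * f) := by rw [neg_one_mul]
  _ = v f := by rw [hmul, h1, zero_add]

lemma span_bound (v : A → ENNReal) (hmul : ∀ f g, v (f * g) = v f + v g)
    (hzero : v 0 = ⊤) (hadd : ∀ f g, min (v f) (v g) ≤ v (f + g))
    (S : Set A) (δ : ENNReal) (hS : ∀ s ∈ S, δ ≤ v s) :
    ∀ z ∈ Ideal.span S, δ ≤ v z := by
  intro z hz
  refine Submodule.span_induction hS (by rw [hzero]; exact le_top) ?_ ?_ hz
  · intro x y _ _ hx hy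
    exact le_trans (le_min hx hy) (hadd x y)
  · intro a x _ hx
    rw [smul_eq_mul, hmul]
    exact le_add_self.trans (add_le_add_right hx (v a))

lemma pow_bound (v : A → ENNReal) (hmul : ∀ f g, v (f * g) = v f + v g)
    (hadd : ∀ f g, min (v f) (v g) ≤ v (f + g))
    (J : Ideal A) (δ : ENNReal) (hJ : ∀ z ∈ J, δ ≤ v z) :
    ∀ (n : ℕ), ∀ z ∈ J ^ n, (n : ENNReal) * δ ≤ v z := by
  intro n
  induction n with
  | zero => intro z _; simp
  | succ n ih =>
    intro z hz
    rw [pow_succ] at hz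
    refine Submodule.mul_induction_on hz (fun x hx y hy => ?_) (fun x y hx hy => ?_)
    · rw [hmul, Nat.cast_succ, add_mul, one_mul]
      exact add_le_add (ih x hx) (hJ y hy)
    · exact le_trans (le_min hx hy) (hadd x y)

lemma iSup_min_le {a b : ℕ → ENNReal} (ha : Monotone a) (hb : Monotone b) :
    min (⨆ n, a n) (⨆ n, b n) ≤ ⨆ n, min (a n) (b n) := by
  rw [show min (⨆ n, a n) (⨆ n, b n) = (⨆ n, a n) ⊓ (⨆ n, b n) from rfl, iSup_inf_eq]
  refine iSup_le fun n => ?_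
  rw [inf_iSup_eq]
  refine iSup_le fun m => ?_
  refine le_trans (inf_le_inf (ha (le_max_left n m)) (hb (le_max_right n m))) ?_
  exact le_iSup (fun k => min (a k) (b k)) (max n m)

lemma nat_mul_gt {δ : ENNReal} (hδ : 0 < δ) {a : ENNReal} (ha : a ≠ ⊤) :
    ∃ n : ℕ, a < (n : ENNReal) * δ := by
  rcases eq_or_ne δ ⊤ with h | h
  · exact ⟨1, by simpa [h] using lt_top_iff_ne_top.mpr ha⟩
  · obtain ⟨n, hn⟩ := ENNReal.exists_nat_gt (ENNReal.div_lt_top ha hδ.ne').ne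
    exact ⟨n, (ENNReal.div_lt_iff (Or.inl hδ.ne') (Or.inl h)).mp hn⟩

/-- Key structural lemma: an element of the adic completion whose `n`-th component
vanishes lies in the image of `I ^ n`. Uses exactness of adic completion over a
Noetherian ring. -/
lemma ker_val_le {R : Type*} [CommRing R] [IsNoetherianRing R] (I : Ideal R) (n : ℕ)
    (y : AdicCompletion I R) (hy : y.val n = 0) :
    y ∈ (I ^ n).map (algebraMap R (AdicCompletion I R)) := by
  set p : Submodule R R := (I ^ n • ⊤ : Ideal R) with hp
  have hpn : p = I ^ n := by rw [hp, smul_eq_mul, Ideal.mul_top]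
  have hy2 : map I p.mkQ y = 0 := by
    refine AdicCompletion.ext fun k => ?_
    obtain ⟨r, hr⟩ := Submodule.Quotient.mk_surjective _ (y.val (max n k))
    have hrk : Submodule.Quotient.mk r = y.val k := by
      rw [← transitionMap_comp_eval_apply I R (le_max_right n k) y, ← hr]; rfl
    have hrn : r ∈ p := by
      have : Submodule.Quotient.mk r = y.val n := by
        rw [← transitionMap_comp_eval_apply I R (le_max_left n k) y, ← hr]; rfl
      rw [hy] at this
      exact (Submodule.Quotient.mk_eq_zero p).mp this
    rw [map_val_apply, ← hrk, LinearMap.reduceModIdeal_apply, val_zero]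
    rw [show p.mkQ r = 0 from (Submodule.Quotient.mk_eq_zero p).mpr hrn]
    simp
  have hex := AdicCompletion.map_exact (I := I) p.injective_subtype
    (LinearMap.exact_subtype_mkQ p) p.mkQ_surjective
  obtain ⟨z, hz⟩ := (hex y).mp hy2
  haveI : Module.Finite R ↥p := Module.Finite.iff_fg.mpr (IsNoetherian.noetherian p)
  obtain ⟨t, ht⟩ := ofTensorProduct_surjective_of_finite I ↥p z
  rw [← hz, ← ht]
  clear hz ht hy2 hy
  induction t with
  | zero => rw [_root_.map_zero, _root_.map_zero]; exact Ideal.zero_mem _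
  | tmul a m =>
    rw [ofTensorProduct_tmul, map_smul,
      show map I p.subtype (of I ↥p m) = of I R (p.subtype m) by
        ext k
        rw [map_val_apply, of_apply, Submodule.mkQ_apply, LinearMap.reduceModIdeal_apply,
          of_apply, Submodule.mkQ_apply]]
    rw [smul_eq_mul (α := AdicCompletion I R)]
    refine Ideal.mul_mem_left _ a (Ideal.mem_map_of_mem _ ?_)
    rw [← hpn]; exact m.2
  | add t₁ t₂ ih₁ ih₂ => rw [map_add, map_add]; exact Ideal.add_mem _ ih₁ ih₂

variable {R : Type*} [CommRing R] (I : Ideal R) (w : R → ENNReal)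

/-- The infimum of `w` over representatives of the `n`-th component. -/
noncomputable def v (n : ℕ) (x : AdicCompletion I R) : ENNReal :=
  ⨅ r : {r : R // (Submodule.Quotient.mk r : R ⧸ (I ^ n • ⊤ : Ideal R)) = x.val n}, w r.1

/-- The extension of `w` to the adic completion. -/
noncomputable def W (x : AdicCompletion I R) : ENNReal := ⨆ n, v I w n x

lemma nonempty_rep (n : ℕ) (x : AdicCompletion I R) :
    Nonempty {r : R // (Submodule.Quotient.mk r : R ⧸ (I ^ n • ⊤ : Ideal R)) = x.val n} :=
  (Submodule.Quotient.mk_surjective _ (x.val n)).elim fun r hr => ⟨⟨r, hr⟩⟩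

lemma rep_down (x : AdicCompletion I R) {m n : ℕ} (h : m ≤ n) (r : R)
    (hr : (Submodule.Quotient.mk r : R ⧸ (I ^ n • ⊤ : Ideal R)) = x.val n) :
    (Submodule.Quotient.mk r : R ⧸ (I ^ m • ⊤ : Ideal R)) = x.val m := by
  rw [← transitionMap_comp_eval_apply I R h x, ← hr]; rfl

lemma v_le (n : ℕ) (x : AdicCompletion I R) (r : R)
    (hr : (Submodule.Quotient.mk r : R ⧸ (I ^ n • ⊤ : Ideal R)) = x.val n) :
    v I w n x ≤ w r :=
  iInf_le (fun s : {r : R // (Submodule.Quotient.mk r : R ⧸ (I ^ n • ⊤ : Ideal R)) = x.val n}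
    => w s.1) ⟨r, hr⟩

lemma v_mono (x : AdicCompletion I R) : Monotone (fun n => v I w n x) := by
  intro m n h
  exact le_iInf fun r => v_le I w m x r.1 (rep_down I x h r.1 r.2)

lemma mem_of_mk_eq {n : ℕ} {s r : R}
    (h : (Submodule.Quotient.mk s : R ⧸ (I ^ n • ⊤ : Ideal R)) = Submodule.Quotient.mk r) :
    s - r ∈ I ^ n := by
  have h0 : (Submodule.Quotient.mk (s - r) : R ⧸ (I ^ n • ⊤ : Ideal R)) = 0 := by
    rw [Submodule.Quotient.mk_sub, h, sub_self]
  have := (Submodule.Quotient.mk_eq_zero _).mp h0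
  rwa [smul_eq_mul, Ideal.mul_top] at this

end LocalValAux

/-- Let `(R,𝔪)` be a Noetherian local ring and `w` a valuation on `R`, nonnegative on
`R` and strictly positive on `𝔪`.  Then `w` is continuous for the `𝔪`-adic topology on
`R` (values in `[0,∞]` with the order topology), and `w` extends uniquely to a local
valuation on the `𝔪`-adic completion of `R`. -/
theorem local_valuation_continuous_and_extends {R : Type*} [CommRing R]
    [IsNoetherianRing R] [IsLocalRing R] (w : R → ENNReal)
    (hmul : ∀ f g : R, w (f * g) = w f + w g)
    (hzero : w 0 = ⊤) (hone : w 1 = 0)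
    (hadd : ∀ f g : R, min (w f) (w g) ≤ w (f + g))
    (hpos : ∀ f ∈ maximalIdeal R, 0 < w f) :
    (@Continuous R ENNReal ((maximalIdeal R).adicTopology) _ w) ∧
    (∃! whext : AdicCompletion (maximalIdeal R) R → ENNReal,
      (∀ f g, whext (f * g) = whext f + whext g) ∧ whext 0 = ⊤ ∧ whext 1 = 0 ∧
      (∀ f g, min (whext f) (whext g) ≤ whext (f + g)) ∧
      (∀ f ∈ (maximalIdeal R).map
          (algebraMap R (AdicCompletion (maximalIdeal R) R)), 0 < whext f) ∧
      ∀ r : R, whext (algebraMap R (AdicCompletion (maximalIdeal R) R) r) = w r) := by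
  classical
  open AdicCompletion LocalValAux in
  set I := maximalIdeal R with hI
  obtain ⟨T, hT⟩ := (IsNoetherian.noetherian I : I.FG)
  set δ : ENNReal := T.inf w with hδdef
  have hδpos : 0 < δ := by
    refine (Finset.lt_inf_iff (by exact lt_top_iff_ne_top.mpr ENNReal.zero_ne_top)).mpr ?_
    intro t ht
    exact hpos t (hT ▸ Ideal.subset_span ht)
  have hIδ : ∀ m ∈ I, δ ≤ w m := by
    intro m hm
    refine LocalValAux.span_bound w hmul hzero hadd (↑T) δ
      (fun s hs => Finset.inf_le hs) m ?_
    show m ∈ Submodule.span R (↑T : Set R)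
    rw [hT]; exact hm
  have hIpow : ∀ (n : ℕ), ∀ m ∈ I ^ n, (n : ENNReal) * δ ≤ w m :=
    LocalValAux.pow_bound w hmul hadd I δ hIδ
  have hDmono : Monotone (fun n : ℕ => (n : ENNReal) * δ) := fun a b h =>
    mul_le_mul_left (Nat.cast_le.mpr h) δ
  have hDgt : ∀ a : ENNReal, a ≠ ⊤ → ∃ n : ℕ, a < (n : ENNReal) * δ :=
    fun a ha => LocalValAux.nat_mul_gt hδpos ha
  have hDtop : (⨆ n : ℕ, (n : ENNReal) * δ) = ⊤ := by
    rw [iSup_eq_top]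
    exact fun b hb => hDgt b hb.ne
  have hneg := LocalValAux.val_neg w hmul hone
  -- constancy of w under perturbation by elements of larger value
  have hconst : ∀ x g : R, w x < w g → w (x + g) = w x := by
    intro x g h
    refine le_antisymm ?_ (min_eq_left h.le ▸ hadd x g)
    by_contra hc
    push_neg at hc
    have h2 : min (w (x + g)) (w (-g)) ≤ w x := by
      have := hadd (x + g) (-g)
      rwa [add_neg_cancel_right] at this
    rw [hneg] at h2
    exact absurd h2 (not_le.mpr (lt_min hc h))
  constructor
  · -- Continuity
    letI : TopologicalSpace R := I.adicTopology
    rw [continuous_iff_continuousAt]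
    intro x
    rw [ContinuousAt, (Ideal.hasBasis_nhds_adic I x).tendsto_left_iff]
    intro t ht
    rcases eq_or_ne (w x) ⊤ with hx | hx
    · obtain ⟨a, ha, hsub⟩ := ENNReal.nhds_top_basis.mem_iff.mp (hx ▸ ht)
      obtain ⟨n, hn⟩ := hDgt a ha.ne
      refine ⟨n, trivial, ?_⟩
      rintro y ⟨g, hg, rfl⟩
      refine hsub (Set.mem_Ioi.mpr (lt_of_lt_of_le hn ?_))
      refine le_trans (le_min (hx ▸ le_top) (hIpow n g hg)) (hadd x g)
    · obtain ⟨n, hn⟩ := hDgt (w x) hx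
      refine ⟨n, trivial, ?_⟩
      rintro y ⟨g, hg, rfl⟩
      rw [show w ((fun y => x + y) g) = w (x + g) from rfl, hconst x g (lt_of_lt_of_le hn (hIpow n g hg))]
      exact mem_of_mem_nhds ht
  · -- Existence and uniqueness of the extension
    haveI hne := LocalValAux.nonempty_rep I
    have hφval : ∀ (r : R) (n : ℕ),
        (Submodule.Quotient.mk r : R ⧸ (I ^ n • ⊤ : Ideal R)) =
          (algebraMap R (AdicCompletion I R) r).val n := fun r n => rfl
    have hprodrep : ∀ (n : ℕ) (f g : AdicCompletion I R) (rf rg : R),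
        (Submodule.Quotient.mk rf : R ⧸ (I ^ n • ⊤ : Ideal R)) = f.val n →
        (Submodule.Quotient.mk rg : R ⧸ (I ^ n • ⊤ : Ideal R)) = g.val n →
        (Submodule.Quotient.mk (rf * rg) : R ⧸ (I ^ n • ⊤ : Ideal R)) = (f * g).val n := by
      intro n f g rf rg hrf hrg
      rw [val_mul, ← hrf, ← hrg]
      exact map_mul (Ideal.Quotient.mk _) rf rg
    -- lower bound for v in terms of a single representative
    have hvge : ∀ (n : ℕ) (x : AdicCompletion I R) (r : R),
        (Submodule.Quotient.mk r : R ⧸ (I ^ n • ⊤ : Ideal R)) = x.val n →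
        min (w r) ((n : ENNReal) * δ) ≤ v I w n x := by
      intro n x r hr
      refine le_iInf fun s => ?_
      have hmem : s.1 - r ∈ I ^ n := mem_of_mk_eq I (s.2.trans hr.symm)
      have hs : r + (s.1 - r) = s.1 := by ring
      have h2 := hadd r (s.1 - r)
      rw [hs] at h2
      exact le_trans (min_le_min le_rfl (hIpow n _ hmem)) h2
    -- W extends w
    have hWφ : ∀ r : R, W I w (algebraMap R (AdicCompletion I R) r) = w r := by
      intro r
      refine le_antisymm (iSup_le fun n => v_le I w n _ r (hφval r n)) ?_
      have h1 := LocalValAux.iSup_min_le (a := fun _ : ℕ => w r)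
        (b := fun n : ℕ => (n : ENNReal) * δ) monotone_const hDmono
      rw [iSup_const, hDtop, min_eq_left le_top] at h1
      exact h1.trans (iSup_mono fun n => hvge n _ r (hφval r n))
    have hW0 : W I w 0 = ⊤ := by
      rw [show (0 : AdicCompletion I R) = algebraMap R (AdicCompletion I R) 0 from
        (_root_.map_zero _).symm, hWφ, hzero]
    have hW1 : W I w 1 = 0 := by
      rw [show (1 : AdicCompletion I R) = algebraMap R (AdicCompletion I R) 1 from
        (map_one _).symm, hWφ, hone]
    have hWadd : ∀ f g : AdicCompletion I R,
        min (W I w f) (W I w g) ≤ W I w (f + g) := by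
      intro f g
      refine le_trans (LocalValAux.iSup_min_le (v_mono I w f) (v_mono I w g))
        (iSup_mono fun n => ?_)
      refine le_iInf fun s => ?_
      obtain ⟨⟨rf, hrf⟩⟩ := hne n f
      have hrg : (Submodule.Quotient.mk (s.1 - rf) : R ⧸ (I ^ n • ⊤ : Ideal R)) = g.val n := by
        rw [Submodule.Quotient.mk_sub, hrf, s.2, val_add_apply, add_sub_cancel_left]
      have hs : rf + (s.1 - rf) = s.1 := by ring
      have h2 := hadd rf (s.1 - rf)
      rw [hs] at h2
      exact le_trans (min_le_min (v_le I w n f rf hrf) (v_le I w n g _ hrg)) h2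
    have hWmul : ∀ f g : AdicCompletion I R,
        W I w (f * g) = W I w f + W I w g := by
      intro f g
      refine le_antisymm (iSup_le fun n => ?_) ?_
      · refine le_trans ?_ (add_le_add (le_iSup (fun n => v I w n f) n)
          (le_iSup (fun n => v I w n g) n))
        have heq : v I w n f + v I w n g =
            ⨅ rf : {r : R // (Submodule.Quotient.mk r : R ⧸ (I ^ n • ⊤ : Ideal R)) = f.val n},
            ⨅ rg : {r : R // (Submodule.Quotient.mk r : R ⧸ (I ^ n • ⊤ : Ideal R)) = g.val n},
              (w rf.1 + w rg.1) := by
          rw [v, ENNReal.iInf_add]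
          exact iInf_congr fun rf => by rw [v, ENNReal.add_iInf]
        rw [heq]
        refine le_iInf fun rf => le_iInf fun rg => ?_
        rw [← hmul]
        exact v_le I w n _ _ (hprodrep n f g rf.1 rg.1 rf.2 rg.2)
      · have hsum : W I w f + W I w g = ⨆ n, (v I w n f + v I w n g) :=
          ENNReal.iSup_add_iSup fun i j =>
            ⟨max i j, add_le_add (v_mono I w f (le_max_left i j))
              (v_mono I w g (le_max_right i j))⟩
        have hmono : Monotone (fun n => v I w n f + v I w n g) := fun a b h =>
          add_le_add (v_mono I w f h) (v_mono I w g h)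
        calc W I w f + W I w g
            = min (⨆ n, (v I w n f + v I w n g)) (⨆ n : ℕ, (n : ENNReal) * δ) := by
              rw [hDtop, min_eq_left le_top, hsum]
          _ ≤ ⨆ n, min (v I w n f + v I w n g) ((n : ENNReal) * δ) :=
              LocalValAux.iSup_min_le hmono hDmono
          _ ≤ ⨆ n, v I w n (f * g) := by
              refine iSup_mono fun n => le_iInf fun s => ?_
              obtain ⟨⟨rf, hrf⟩⟩ := hne n f
              obtain ⟨⟨rg, hrg⟩⟩ := hne n g
              have hmem : s.1 - rf * rg ∈ I ^ n :=
                mem_of_mk_eq I (s.2.trans (hprodrep n f g rf rg hrf hrg).symm)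
              have hs : rf * rg + (s.1 - rf * rg) = s.1 := by ring
              have h2 := hadd (rf * rg) (s.1 - rf * rg)
              rw [hs, hmul] at h2
              refine le_trans (min_le_min ?_ (hIpow n _ hmem)) h2
              exact add_le_add (v_le I w n f rf hrf) (v_le I w n g rg hrg)
    -- lower bounds on powers of the maximal ideal of the completion,
    -- for any function with the valuation properties extending w
    have hpowbound : ∀ u : AdicCompletion I R → ENNReal,
        (∀ f g, u (f * g) = u f + u g) → u 0 = ⊤ →
        (∀ f g, min (u f) (u g) ≤ u (f + g)) →
        (∀ r : R, u (algebraMap R (AdicCompletion I R) r) = w r) →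
        ∀ (n : ℕ), ∀ z ∈ (I ^ n).map (algebraMap R (AdicCompletion I R)),
          (n : ENNReal) * δ ≤ u z := by
      intro u humul huzero huadd huφ n z hz
      have hbase : ∀ z ∈ I.map (algebraMap R (AdicCompletion I R)), δ ≤ u z := by
        intro z hz
        refine LocalValAux.span_bound u humul huzero huadd
          (algebraMap R (AdicCompletion I R) '' I) δ ?_ z hz
        rintro s ⟨m, hm, rfl⟩
        rw [huφ]
        exact hIδ m hm
      refine LocalValAux.pow_bound u humul huadd
        (I.map (algebraMap R (AdicCompletion I R))) δ hbase n z ?_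
      rw [← Ideal.map_pow]; exact hz
    -- the uniqueness core
    have haux : ∀ u W' : AdicCompletion I R → ENNReal,
        (∀ f g, u (f * g) = u f + u g) → u 0 = ⊤ → u 1 = 0 →
        (∀ f g, min (u f) (u g) ≤ u (f + g)) →
        (∀ r : R, u (algebraMap R (AdicCompletion I R) r) = w r) →
        (∀ f g, W' (f * g) = W' f + W' g) → W' 0 = ⊤ → W' 1 = 0 →
        (∀ f g, min (W' f) (W' g) ≤ W' (f + g)) →
        (∀ r : R, W' (algebraMap R (AdicCompletion I R) r) = w r) →
        ∀ x, ¬ (u x < W' x) := by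
      intro u W' humul huzero huone huadd huφ hWmul' hWzero' hWone' hWadd' hWφ' x hlt
      obtain ⟨n, hn⟩ := hDgt (u x) hlt.ne_top
      obtain ⟨r, hr⟩ := Submodule.Quotient.mk_surjective _ (x.val n)
      set y : AdicCompletion I R := x - algebraMap R (AdicCompletion I R) r with hy
      have hyv : y.val n = 0 := by
        rw [hy, val_sub_apply, ← hφval r n, hr, sub_self]
      have hymem := LocalValAux.ker_val_le I n y hyv
      have hyu : (n : ENNReal) * δ ≤ u y :=
        hpowbound u humul huzero huadd huφ n y hymem
      have hyW' : (n : ENNReal) * δ ≤ W' y :=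
        hpowbound W' hWmul' hWzero' hWadd' hWφ' n y hymem
      -- u x ≥ min (w r) (n δ), hence w r ≤ u x (since u x < n δ)
      have hur : min (w r) ((n : ENNReal) * δ) ≤ u x := by
        have hx : algebraMap R (AdicCompletion I R) r + y = x := by rw [hy]; ring
        have h2 := huadd (algebraMap R (AdicCompletion I R) r) y
        rw [hx, huφ] at h2
        exact le_trans (min_le_min le_rfl hyu) h2
      have hwr_le : w r ≤ u x := by
        by_contra h
        push_neg at h
        exact absurd hur (not_le.mpr (lt_min h hn))
      -- W' (φ r) ≥ min (W' x) (n δ)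
      have h3 : min (W' x) ((n : ENNReal) * δ) ≤ w r := by
        have hx : x + (-y) = algebraMap R (AdicCompletion I R) r := by rw [hy]; ring
        have h2 := hWadd' x (-y)
        rw [hx, hWφ', LocalValAux.val_neg W' hWmul' hWone' y] at h2
        exact le_trans (min_le_min le_rfl hyW') h2
      exact absurd h3 (not_le.mpr (lt_of_le_of_lt hwr_le (lt_min hlt hn)))
    refine ⟨W I w, ⟨hWmul, hW0, hW1, hWadd, ?_, hWφ⟩, ?_⟩
    · -- positivity on the maximal ideal of the completion
      intro f hf
      refine lt_of_lt_of_le hδpos ?_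
      have := hpowbound (W I w) hWmul hW0 hWadd hWφ 1 f (by rwa [pow_one])
      simpa using this
    · intro u hu
      obtain ⟨humul, huzero, huone, huadd, _, huφ⟩ := hu
      funext x
      exact le_antisymm
        (not_lt.mp (haux (W I w) u hWmul hW0 hW1 hWadd hWφ humul huzero huone huadd huφ x))
        (not_lt.mp (haux u (W I w) humul huzero huone huadd huφ hWmul hW0 hW1 hWadd hWφ x))
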